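/- Let F = f^⊕ and G = g^⊕ be cyclically symmetric homogeneous polynomials of degrees r' and r'' respectively. Suppose the seed f is of class D(C_f, σ') and the seed g is of class D(C_g, σ''), and let 0 < σ < min(σ', σ''). Then the Poisson bracket {F,G} admits a seed h of class D(C_h, σ) with C_h = r' r'' C_f C_g / ((1 − e^{−max(σ',σ'')})(1 − e^{−max(σ',σ'')+σ})). -/

import Mathlib

open MvPolynomial

/-- Polynomials in the `2N` phase-space variables `x_0,…,x_{N−1},y_0,…,y_{N−1}`:
`Sum.inl l` is the variable `x_l` and `Sum.inr l` is `y_l`. -/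
abbrev Pol (N : ℕ) := MvPolynomial (Fin N ⊕ Fin N) ℝ

/-- Poisson bracket `{f,g} = Σ_l (∂f/∂x_l ∂g/∂y_l − ∂f/∂y_l ∂g/∂x_l)`. -/
noncomputable def pbracket {N : ℕ} (f g : Pol N) : Pol N :=
  ∑ l : Fin N,
    (pderiv (Sum.inl l) f * pderiv (Sum.inr l) g -
      pderiv (Sum.inr l) f * pderiv (Sum.inl l) g)

/-- Polynomial norm: the sum of the absolute values of the coefficients. -/
noncomputable def pnorm {N : ℕ} (f : Pol N) : ℝ :=
  ∑ d ∈ f.support, |coeff d f|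

/-- Action of the cyclic permutation `τ` on polynomials: `(τ f)(x,y) = f(τx, τy)`,
where `(τ x)_j = x_{j+1 mod N}`. -/
noncomputable def cshiftP {N : ℕ} (f : Pol N) : Pol N :=
  rename (Sum.map (finRotate N : Fin N → Fin N) (finRotate N : Fin N → Fin N)) f

/-- The extensive function generated by a seed: `f^⊕ = Σ_{l=1}^N τ^l f`. -/
noncomputable def oplus {N : ℕ} (f : Pol N) : Pol N :=
  ∑ l ∈ Finset.Icc 1 N, cshiftP^[l] f

/-- Set of sites appearing (in `x` or `y`) with nonzero exponent in a monomial. -/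
def siteSupport {N : ℕ} (d : (Fin N ⊕ Fin N) →₀ ℕ) : Finset (Fin N) :=
  Finset.univ.filter fun l => d (Sum.inl l) ≠ 0 ∨ d (Sum.inr l) ≠ 0

/-- `f` is left aligned with interaction range at most `m`: every monomial of `f`
involves only the sites `0,…,m`. -/
def RangeLE {N : ℕ} (m : ℕ) (f : Pol N) : Prop :=
  ∀ d ∈ f.support, ∀ l ∈ siteSupport d, (l : ℕ) ≤ m

/-- `F` is a decomposition `f = Σ_{m≥0} f^{(m)}` of the seed `f` into left-aligned
components of increasing interaction range (truncated at `m = N` on the periodic chain). -/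
def IsDecomp {N : ℕ} (f : Pol N) (F : ℕ → Pol N) : Prop :=
  f = ∑ m ∈ Finset.range (N + 1), F m ∧ ∀ m, RangeLE m (F m)

/-- Exponential decay `‖f^{(m)}‖ ≤ C e^{−σm}` of the components of a decomposition. -/
def Decay {N : ℕ} (C σ : ℝ) (F : ℕ → Pol N) : Prop :=
  ∀ m : ℕ, pnorm (F m) ≤ C * Real.exp (-σ * m)

/-- A seed `f` is of class `D(C,σ)` if it admits a decomposition `f = Σ_m f^{(m)}`
into left-aligned components of interaction range at most `m` with `‖f^{(m)}‖ ≤ C e^{−σm}`. -/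
def SeedClassD {N : ℕ} (C σ : ℝ) (f : Pol N) : Prop :=
  ∃ F : ℕ → Pol N, IsDecomp f F ∧ Decay C σ F



open Finset
open Fin.NatCast
namespace St4
variable {N : ℕ}


lemma pnorm_nonneg (p : Pol N) : 0 ≤ pnorm p :=
  Finset.sum_nonneg fun _ _ => abs_nonneg _

lemma pnorm_eq_sum {p : Pol N} {s : Finset ((Fin N ⊕ Fin N) →₀ ℕ)} (h : p.support ⊆ s) :
    pnorm p = ∑ d ∈ s, |coeff d p| := by
  refine Finset.sum_subset h fun d _ hd => ?_
  rw [MvPolynomial.notMem_support_iff.mp hd, abs_zero]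

lemma pnorm_zero : pnorm (0 : Pol N) = 0 := by simp [pnorm]

lemma pnorm_add_le (p q : Pol N) : pnorm (p + q) ≤ pnorm p + pnorm q := by
  classical
  rw [pnorm_eq_sum (s := p.support ∪ q.support) (MvPolynomial.support_add),
    pnorm_eq_sum (s := p.support ∪ q.support) Finset.subset_union_left,
    pnorm_eq_sum (s := p.support ∪ q.support) Finset.subset_union_right, ← Finset.sum_add_distrib]
  exact Finset.sum_le_sum fun d _ => by rw [coeff_add]; exact abs_add_le _ _

lemma pnorm_neg (p : Pol N) : pnorm (-p) = pnorm p := by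
  simp [pnorm, MvPolynomial.support_neg]

lemma pnorm_sub_le (p q : Pol N) : pnorm (p - q) ≤ pnorm p + pnorm q := by
  rw [sub_eq_add_neg]; simpa [pnorm_neg] using pnorm_add_le p (-q)

lemma pnorm_sum_le {α : Type*} (s : Finset α) (f : α → Pol N) :
    pnorm (∑ i ∈ s, f i) ≤ ∑ i ∈ s, pnorm (f i) := by
  classical
  induction s using Finset.induction_on with
  | empty => simp [pnorm_zero]
  | insert _ _ h ih =>
    rw [Finset.sum_insert h, Finset.sum_insert h]
    exact (pnorm_add_le _ _).trans (by linarith)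

lemma pnorm_monomial_le (d : (Fin N ⊕ Fin N) →₀ ℕ) (c : ℝ) : pnorm (monomial d c) ≤ |c| := by
  classical
  rcases eq_or_ne c 0 with rfl | hc
  · simp [pnorm_zero]
  · rw [pnorm, MvPolynomial.support_monomial, if_neg hc]
    simp

lemma pnorm_mul_le (p q : Pol N) : pnorm (p * q) ≤ pnorm p * pnorm q := by
  classical
  conv_lhs => rw [p.as_sum, Finset.sum_mul]
  refine (pnorm_sum_le _ _).trans ?_
  rw [pnorm, Finset.sum_mul]
  refine Finset.sum_le_sum fun d _ => ?_
  conv_lhs => rw [q.as_sum, Finset.mul_sum]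
  refine (pnorm_sum_le _ _).trans ?_
  rw [pnorm, Finset.mul_sum]
  refine Finset.sum_le_sum fun e _ => ?_
  rw [MvPolynomial.monomial_mul]
  exact (pnorm_monomial_le _ _).trans (by rw [abs_mul])





lemma pnorm_pderiv_le (v : Fin N ⊕ Fin N) (p : Pol N) :
    pnorm (pderiv v p) ≤ ∑ d ∈ p.support, (d v : ℝ) * |coeff d p| := by
  classical
  conv_lhs => rw [p.as_sum]
  rw [map_sum]
  refine (pnorm_sum_le _ _).trans (Finset.sum_le_sum fun d _ => ?_)
  rw [pderiv_monomial]
  refine (pnorm_monomial_le _ _).trans ?_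
  rw [abs_mul, Nat.abs_cast, mul_comm]

lemma sum_pnorm_pderiv_le {r : ℕ} {p : Pol N} (hp : p.IsHomogeneous r) :
    ∑ v : Fin N ⊕ Fin N, pnorm (pderiv v p) ≤ (r : ℝ) * pnorm p := by
  classical
  refine (Finset.sum_le_sum fun v _ => pnorm_pderiv_le v p).trans ?_
  rw [Finset.sum_comm, pnorm, Finset.mul_sum]
  refine le_of_eq (Finset.sum_congr rfl fun d hd => ?_)
  rw [← Finset.sum_mul]
  congr 1
  have hdeg : d.degree = r := by
    have := hp (MvPolynomial.mem_support_iff.mp hd)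
    rw [Finsupp.degree_eq_weight_one (R := ℕ)]; exact this
  rw [← hdeg, Finsupp.degree]
  rw [← Nat.cast_sum]
  norm_cast
  exact (Finset.sum_subset (Finset.subset_univ _) fun v _ hv => Finsupp.notMem_support_iff.mp hv).symm




/-- the rotation permutation on the variable index set -/
def rotE (N : ℕ) (k : ℕ) : (Fin N ⊕ Fin N) ≃ (Fin N ⊕ Fin N) :=
  Equiv.sumCongr ((finRotate N)^k : Equiv.Perm (Fin N)) ((finRotate N)^k : Equiv.Perm (Fin N))

lemma cshiftP_iterate (k : ℕ) (p : Pol N) :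
    cshiftP^[k] p = rename (⇑(rotE N k)) p := by
  induction k generalizing p with
  | zero =>
    simp only [Function.iterate_zero, id_eq, rotE, pow_zero]
    rw [show ⇑(Equiv.sumCongr (1 : Equiv.Perm (Fin N)) 1) = id by ext x; cases x <;> rfl]
    rw [rename_id]
    rfl
  | succ k ih =>
    rw [Function.iterate_succ_apply, ih, cshiftP, rename_rename]
    congr 1
    ext x
    cases x <;> simp [rotE, pow_succ, Equiv.Perm.mul_apply]

lemma finRotate_pow_apply {n : ℕ} (l : ℕ) (i : Fin (n+1)) :
    ((finRotate (n+1))^l) i = i + (l : Fin (n+1)) := by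
  induction l with
  | zero => simp
  | succ l ih =>
    rw [pow_succ', Equiv.Perm.mul_apply, ih, finRotate_succ_apply, Nat.cast_add, Nat.cast_one,
      add_assoc]

lemma finRotate_pow_N (hN : N ≠ 0) : ((finRotate N)^N : Equiv.Perm (Fin N)) = 1 := by
  obtain ⟨n, rfl⟩ := Nat.exists_eq_succ_of_ne_zero hN
  ext i
  simp [finRotate_pow_apply]

lemma cshiftP_iterate_N (p : Pol N) : cshiftP^[N] p = p := by
  rcases eq_or_ne N 0 with rfl | hN
  · simp
  · rw [cshiftP_iterate, rotE, finRotate_pow_N hN]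
    rw [show ⇑(Equiv.sumCongr (1 : Equiv.Perm (Fin N)) 1) = id by ext x; cases x <;> rfl]
    rw [rename_id]
    rfl

lemma pnorm_rename_equiv (e : (Fin N ⊕ Fin N) ≃ (Fin N ⊕ Fin N)) (p : Pol N) :
    pnorm (rename ⇑e p) = pnorm p := by
  classical
  rw [pnorm, support_rename_of_injective e.injective, Finset.sum_image
    (fun a _ b _ h => (Finsupp.mapDomain_injective e.injective) h)]
  exact Finset.sum_congr rfl fun d _ => by
    rw [coeff_rename_mapDomain _ e.injective]

lemma pnorm_cshiftP_iterate (k : ℕ) (p : Pol N) : pnorm (cshiftP^[k] p) = pnorm p := by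
  rw [cshiftP_iterate, pnorm_rename_equiv]

lemma pbracket_cshiftP_iterate (k : ℕ) (a b : Pol N) :
    cshiftP^[k] (pbracket a b) = pbracket (cshiftP^[k] a) (cshiftP^[k] b) := by
  classical
  rw [cshiftP_iterate, cshiftP_iterate, cshiftP_iterate, pbracket, map_sum, pbracket]
  rw [← Equiv.sum_comp ((finRotate N)^k : Equiv.Perm (Fin N))
    (fun l => pderiv (Sum.inl l) (rename (⇑(rotE N k)) a) * pderiv (Sum.inr l) (rename (⇑(rotE N k)) b)
      - pderiv (Sum.inr l) (rename (⇑(rotE N k)) a) * pderiv (Sum.inl l) (rename (⇑(rotE N k)) b))]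
  refine Finset.sum_congr rfl fun l _ => ?_
  have h1 : ∀ (q : Pol N), pderiv (Sum.inl (((finRotate N)^k : Equiv.Perm (Fin N)) l)) (rename (⇑(rotE N k)) q)
      = rename (⇑(rotE N k)) (pderiv (Sum.inl l) q) := fun q =>
    pderiv_rename (rotE N k).injective (Sum.inl l) q
  have h2 : ∀ (q : Pol N), pderiv (Sum.inr (((finRotate N)^k : Equiv.Perm (Fin N)) l)) (rename (⇑(rotE N k)) q)
      = rename (⇑(rotE N k)) (pderiv (Sum.inr l) q) := fun q =>
    pderiv_rename (rotE N k).injective (Sum.inr l) q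
  rw [map_sub, map_mul, map_mul, h1, h2, h1, h2]







lemma cshiftP_iterate_sum {α : Type*} (k : ℕ) (s : Finset α) (f : α → Pol N) :
    cshiftP^[k] (∑ i ∈ s, f i) = ∑ i ∈ s, cshiftP^[k] (f i) := by
  simp only [cshiftP_iterate]; exact map_sum _ _ _

lemma cshiftP_iterate_zero (k : ℕ) : cshiftP^[k] (0 : Pol N) = 0 := by
  simp only [cshiftP_iterate]; exact map_zero _

lemma oplus_sum {α : Type*} (s : Finset α) (f : α → Pol N) :
    oplus (∑ i ∈ s, f i) = ∑ i ∈ s, oplus (f i) := by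
  unfold oplus
  rw [Finset.sum_comm]
  exact Finset.sum_congr rfl fun l _ => cshiftP_iterate_sum l s f

lemma oplus_cshiftP (q : Pol N) : oplus (cshiftP q) = oplus q := by
  unfold oplus
  have key : ∀ l : ℕ, cshiftP^[l] (cshiftP q) = cshiftP^[l+1] q := fun l => by
    rw [Function.iterate_succ_apply]
  simp only [key]
  rw [show Finset.Icc 1 N = Finset.Ico 1 (N+1) by rfl, Finset.sum_Ico_eq_sum_range,
    Finset.sum_Ico_eq_sum_range]
  simp only [Nat.add_sub_cancel]
  rcases Nat.eq_zero_or_pos N with rfl | hN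
  · simp
  obtain ⟨n, rfl⟩ := Nat.exists_eq_succ_of_ne_zero hN.ne'
  rw [Finset.sum_range_succ, Finset.sum_range_succ']
  have e1 : ∀ i, 1 + (i + 1) = 1 + i + 1 := fun i => by ring
  simp only [e1]
  congr 1
  rw [show 1 + n + 1 = 2 + n by ring]
  conv_lhs => rw [show (2:ℕ) + n = 2 + (n+1) - 1 by omega]
  rw [show (2:ℕ) + (n+1) - 1 = 1 + (n+1) by omega, Function.iterate_add_apply, cshiftP_iterate_N]

lemma oplus_cshiftP_iterate (s : ℕ) (q : Pol N) : oplus (cshiftP^[s] q) = oplus q := by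
  induction s generalizing q with
  | zero => rfl
  | succ s ih => rw [Function.iterate_succ_apply, ih, oplus_cshiftP]






/-- all sites of all monomials of `p` lie in `S` -/
def sitesIn (S : Finset (Fin N)) (p : Pol N) : Prop :=
  ∀ d ∈ p.support, ∀ l ∈ siteSupport d, l ∈ S

lemma sitesIn_zero (S : Finset (Fin N)) : sitesIn S (0 : Pol N) := by
  intro d hd; simp at hd

lemma sitesIn_mono {S T : Finset (Fin N)} {p : Pol N} (h : S ⊆ T) (hp : sitesIn S p) :
    sitesIn T p := fun d hd l hl => h (hp d hd l hl)

lemma siteSupport_add (d e : (Fin N ⊕ Fin N) →₀ ℕ) :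
    siteSupport (d + e) ⊆ siteSupport d ∪ siteSupport e := by
  intro l hl
  rw [siteSupport, Finset.mem_filter] at hl
  simp only [siteSupport, Finset.mem_filter, Finset.mem_univ, true_and, Finsupp.add_apply,
    Finset.mem_union] at *
  omega

lemma sitesIn_mul {S T : Finset (Fin N)} {p q : Pol N} (hp : sitesIn S p) (hq : sitesIn T q) :
    sitesIn (S ∪ T) (p * q) := by
  classical
  intro d hd l hl
  obtain ⟨d1, hd1, d2, hd2, rfl⟩ := Finset.mem_add.mp (MvPolynomial.support_mul p q hd)
  rcases Finset.mem_union.mp (siteSupport_add d1 d2 hl) with h | h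
  · exact Finset.mem_union_left _ (hp d1 hd1 l h)
  · exact Finset.mem_union_right _ (hq d2 hd2 l h)

lemma sitesIn_sub {S : Finset (Fin N)} {p q : Pol N} (hp : sitesIn S p) (hq : sitesIn S q) :
    sitesIn S (p - q) := by
  intro d hd l hl
  have := MvPolynomial.support_sub _ p q hd
  rcases Finset.mem_union.mp this with h | h
  · exact hp d h l hl
  · exact hq d h l hl

lemma sitesIn_sum {α : Type*} {S : Finset (Fin N)} {s : Finset α} {f : α → Pol N}
    (h : ∀ i ∈ s, sitesIn S (f i)) : sitesIn S (∑ i ∈ s, f i) := by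
  classical
  intro d hd l hl
  obtain ⟨i, hi, hdi⟩ := Finset.mem_biUnion.mp (MvPolynomial.support_sum hd)
  exact h i hi d hdi l hl

lemma sitesIn_pderiv {S : Finset (Fin N)} {p : Pol N} (hp : sitesIn S p) (v : Fin N ⊕ Fin N) :
    sitesIn S (pderiv v p) := by
  classical
  have : pderiv v p = ∑ d ∈ p.support, monomial (d - Finsupp.single v 1) (coeff d p * d v) := by
    conv_lhs => rw [p.as_sum]
    rw [map_sum]
    exact Finset.sum_congr rfl fun d _ => pderiv_monomial
  rw [this]
  refine sitesIn_sum fun d hd => ?_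
  intro e he l hl
  have hsub : e = d - Finsupp.single v 1 := by
    by_cases hc : coeff d p * (d v : ℝ) = 0
    · simp [hc] at he
    · rw [MvPolynomial.support_monomial, if_neg hc] at he
      simpa using he
  refine hp d hd l ?_
  subst hsub
  rw [siteSupport, Finset.mem_filter] at hl
  simp only [siteSupport, Finset.mem_filter, Finset.mem_univ, true_and,
    Finsupp.tsub_apply] at hl ⊢
  omega

lemma pderiv_eq_zero_of_sites {S : Finset (Fin N)} {p : Pol N} (hp : sitesIn S p)
    {s : Fin N} (hs : s ∉ S) :
    pderiv (Sum.inl s) p = 0 ∧ pderiv (Sum.inr s) p = 0 := by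
  classical
  have key : ∀ v : Fin N ⊕ Fin N, (∀ d ∈ p.support, d v = 0) → pderiv v p = 0 := by
    intro v h
    conv_lhs => rw [p.as_sum]
    rw [map_sum]
    refine Finset.sum_eq_zero fun d hd => ?_
    rw [pderiv_monomial, h d hd]
    simp
  constructor <;> refine key _ fun d hd => ?_ <;> by_contra hne
  · exact hs (hp d hd s (by simp [siteSupport, hne]))
  · exact hs (hp d hd s (by simp [siteSupport, hne]))

lemma sitesIn_pbracket {S T : Finset (Fin N)} {p q : Pol N} (hp : sitesIn S p)
    (hq : sitesIn T q) : sitesIn (S ∪ T) (pbracket p q) := by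
  refine sitesIn_sum fun s _ => sitesIn_sub ?_ ?_
  · exact sitesIn_mul (sitesIn_pderiv hp _) (sitesIn_pderiv hq _)
  · exact sitesIn_mul (sitesIn_pderiv hp _) (sitesIn_pderiv hq _)

lemma pbracket_eq_zero_of_disjoint {S T : Finset (Fin N)} {p q : Pol N}
    (hST : Disjoint S T) (hp : sitesIn S p) (hq : sitesIn T q) : pbracket p q = 0 := by
  classical
  refine Finset.sum_eq_zero fun s _ => ?_
  by_cases hsS : s ∈ S
  · have hsT : s ∉ T := fun h => (Finset.disjoint_left.mp hST hsS) h
    obtain ⟨h1, h2⟩ := pderiv_eq_zero_of_sites hq hsT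
    rw [h1, h2, mul_zero, mul_zero, sub_zero]
  · obtain ⟨h1, h2⟩ := pderiv_eq_zero_of_sites hp hsS
    rw [h1, h2, zero_mul, zero_mul, sub_zero]

lemma sitesIn_cshiftP_iterate {S : Finset (Fin N)} {p : Pol N} (hp : sitesIn S p) (k : ℕ) :
    sitesIn (S.image (fun t => ((finRotate N)^k : Equiv.Perm (Fin N)) t)) (cshiftP^[k] p) := by
  classical
  rw [cshiftP_iterate]
  intro d hd l hl
  rw [support_rename_of_injective (rotE N k).injective] at hd
  obtain ⟨e, he, rfl⟩ := Finset.mem_image.mp hd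
  have hmap : ∀ u, Finsupp.mapDomain (⇑(rotE N k)) e u = e ((rotE N k).symm u) := fun u =>
    Finsupp.mapDomain_equiv_apply (f := rotE N k) e u
  simp only [siteSupport, Finset.mem_filter, Finset.mem_univ, true_and, hmap] at hl
  have hsymm : ∀ l : Fin N, (rotE N k).symm (Sum.inl l)
      = Sum.inl ((((finRotate N)^k : Equiv.Perm (Fin N)))⁻¹ l) := fun l => rfl
  have hsymm' : ∀ l : Fin N, (rotE N k).symm (Sum.inr l)
      = Sum.inr ((((finRotate N)^k : Equiv.Perm (Fin N)))⁻¹ l) := fun l => rfl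
  rw [hsymm, hsymm'] at hl
  refine Finset.mem_image.mpr ⟨(((finRotate N)^k : Equiv.Perm (Fin N)))⁻¹ l, ?_, ?_⟩
  · exact hp e he _ (by simpa [siteSupport] using hl)
  · simp





lemma finRotate_pow_inv_apply {n : ℕ} (l : ℕ) (s : Fin (n+1)) :
    (((finRotate (n+1))^l)⁻¹ : Equiv.Perm (Fin (n+1))) s = s - (l : Fin (n+1)) := by
  have h := finRotate_pow_apply l (s - (l : Fin (n+1)))
  rw [sub_add_cancel] at h
  conv_lhs => rw [← h]
  exact Equiv.symm_apply_apply _ _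

lemma sum_Icc_shift_eq {n : ℕ} (G : Fin (n+1) → ℝ) (s : Fin (n+1)) :
    ∑ l ∈ Finset.Icc 1 (n+1),
        G ((((finRotate (n+1))^l)⁻¹ : Equiv.Perm (Fin (n+1))) s)
      = ∑ t : Fin (n+1), G t := by
  simp only [finRotate_pow_inv_apply]
  rw [show Finset.Icc 1 (n+1) = Finset.Ico 1 (n+2) by rfl, Finset.sum_Ico_eq_sum_range]
  rw [show n + 2 - 1 = n + 1 by omega]
  have key : ∀ i : ℕ, s - ((1 + i : ℕ) : Fin (n+1)) = (s - 1) - ((i : ℕ) : Fin (n+1)) := by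
    intro i
    rw [Nat.cast_add, Nat.cast_one, sub_add_eq_sub_sub]
  simp only [key]
  rw [← Fin.sum_univ_eq_sum_range (fun i : ℕ => G ((s-1) - (i : Fin (n+1)))) (n+1)]
  simp only [Fin.cast_val_eq_self]
  exact Equiv.sum_comp (Equiv.subLeft (s-1)) G

lemma pnorm_pbracket_le (a c : Pol N) :
    pnorm (pbracket a c) ≤ ∑ s : Fin N,
      (pnorm (pderiv (Sum.inl s) a) * pnorm (pderiv (Sum.inr s) c)
        + pnorm (pderiv (Sum.inr s) a) * pnorm (pderiv (Sum.inl s) c)) := by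
  refine (pnorm_sum_le _ _).trans (Finset.sum_le_sum fun s _ => ?_)
  refine (pnorm_sub_le _ _).trans ?_
  exact add_le_add (pnorm_mul_le _ _) (pnorm_mul_le _ _)

lemma pderiv_cshiftP_iterate (l : ℕ) (b : Pol N) (s : Fin N) :
    (pnorm (pderiv (Sum.inl s) (cshiftP^[l] b))
        = pnorm (pderiv (Sum.inl ((((finRotate N)^l)⁻¹ : Equiv.Perm (Fin N)) s)) b))
      ∧ (pnorm (pderiv (Sum.inr s) (cshiftP^[l] b))
        = pnorm (pderiv (Sum.inr ((((finRotate N)^l)⁻¹ : Equiv.Perm (Fin N)) s)) b)) := by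
  have hs : Sum.inl s = (rotE N l) (Sum.inl ((((finRotate N)^l)⁻¹ : Equiv.Perm (Fin N)) s)) := by
    simp [rotE]
  have hs' : Sum.inr s = (rotE N l) (Sum.inr ((((finRotate N)^l)⁻¹ : Equiv.Perm (Fin N)) s)) := by
    simp [rotE]
  constructor
  · rw [cshiftP_iterate, hs, pderiv_rename (rotE N l).injective]
    exact pnorm_rename_equiv _ _
  · rw [cshiftP_iterate, hs', pderiv_rename (rotE N l).injective]
    exact pnorm_rename_equiv _ _


lemma sum_pnorm_pbracket_shifts {r' r'' : ℕ} (a b : Pol N)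
    (ha : a.IsHomogeneous r') (hb : b.IsHomogeneous r'') :
    ∑ l ∈ Finset.Icc 1 N, pnorm (pbracket a (cshiftP^[l] b))
      ≤ (r' : ℝ) * r'' * (pnorm a * pnorm b) := by
  rcases Nat.eq_zero_or_pos N with rfl | hN
  · rw [show Finset.Icc 1 0 = (∅ : Finset ℕ) by rfl, Finset.sum_empty]
    exact mul_nonneg (mul_nonneg (Nat.cast_nonneg _) (Nat.cast_nonneg _))
      (mul_nonneg (pnorm_nonneg _) (pnorm_nonneg _))
  obtain ⟨n, rfl⟩ := Nat.exists_eq_succ_of_ne_zero hN.ne'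
  set Nn := n + 1
  -- abbreviations
  set A1 : Fin Nn → ℝ := fun s => pnorm (pderiv (Sum.inl s) a) with hA1
  set A2 : Fin Nn → ℝ := fun s => pnorm (pderiv (Sum.inr s) a) with hA2
  set B1 : Fin Nn → ℝ := fun t => pnorm (pderiv (Sum.inl t) b) with hB1
  set B2 : Fin Nn → ℝ := fun t => pnorm (pderiv (Sum.inr t) b) with hB2
  have hbound : ∀ l ∈ Finset.Icc 1 Nn, pnorm (pbracket a (cshiftP^[l] b))
      ≤ ∑ s : Fin Nn,
        (A1 s * B2 ((((finRotate Nn)^l)⁻¹ : Equiv.Perm (Fin Nn)) s)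
          + A2 s * B1 ((((finRotate Nn)^l)⁻¹ : Equiv.Perm (Fin Nn)) s)) := by
    intro l _
    refine (pnorm_pbracket_le a _).trans (le_of_eq ?_)
    refine Finset.sum_congr rfl fun s _ => ?_
    rw [(pderiv_cshiftP_iterate l b s).1, (pderiv_cshiftP_iterate l b s).2]
  refine (Finset.sum_le_sum hbound).trans ?_
  rw [Finset.sum_comm]
  have hswap : ∀ s : Fin Nn,
      ∑ l ∈ Finset.Icc 1 Nn,
        (A1 s * B2 ((((finRotate Nn)^l)⁻¹ : Equiv.Perm (Fin Nn)) s)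
          + A2 s * B1 ((((finRotate Nn)^l)⁻¹ : Equiv.Perm (Fin Nn)) s))
      = A1 s * (∑ t : Fin Nn, B2 t) + A2 s * (∑ t : Fin Nn, B1 t) := by
    intro s
    rw [Finset.sum_add_distrib, ← Finset.mul_sum, ← Finset.mul_sum]
    rw [sum_Icc_shift_eq B2 s, sum_Icc_shift_eq B1 s]
  rw [Finset.sum_congr rfl fun s _ => hswap s]
  -- now bound
  have hAB : (∑ s : Fin Nn, A1 s) + (∑ s : Fin Nn, A2 s) ≤ (r' : ℝ) * pnorm a := by
    have := sum_pnorm_pderiv_le ha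
    rwa [Fintype.sum_sum_type] at this
  have hBB : (∑ t : Fin Nn, B1 t) + (∑ t : Fin Nn, B2 t) ≤ (r'' : ℝ) * pnorm b := by
    have := sum_pnorm_pderiv_le hb
    rwa [Fintype.sum_sum_type] at this
  have hA1n : 0 ≤ ∑ s : Fin Nn, A1 s := Finset.sum_nonneg fun s _ => pnorm_nonneg _
  have hA2n : 0 ≤ ∑ s : Fin Nn, A2 s := Finset.sum_nonneg fun s _ => pnorm_nonneg _
  have hB1n : 0 ≤ ∑ s : Fin Nn, B1 s := Finset.sum_nonneg fun s _ => pnorm_nonneg _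
  have hB2n : 0 ≤ ∑ s : Fin Nn, B2 s := Finset.sum_nonneg fun s _ => pnorm_nonneg _
  have hbn : (0:ℝ) ≤ (r'' : ℝ) * pnorm b := le_trans (by linarith) hBB
  rw [Finset.sum_add_distrib, ← Finset.sum_mul, ← Finset.sum_mul]
  have e1 : (∑ s : Fin Nn, A1 s) * (∑ t : Fin Nn, B2 t)
      ≤ (∑ s : Fin Nn, A1 s) * ((r'':ℝ) * pnorm b) :=
    mul_le_mul_of_nonneg_left (by linarith) hA1n
  have e2 : (∑ s : Fin Nn, A2 s) * (∑ t : Fin Nn, B1 t)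
      ≤ (∑ s : Fin Nn, A2 s) * ((r'':ℝ) * pnorm b) :=
    mul_le_mul_of_nonneg_left (by linarith) hA2n
  have e3 : ((∑ s : Fin Nn, A1 s) + (∑ s : Fin Nn, A2 s)) * ((r'':ℝ) * pnorm b)
      ≤ ((r':ℝ) * pnorm a) * ((r'':ℝ) * pnorm b) :=
    mul_le_mul_of_nonneg_right hAB hbn
  calc (∑ s : Fin Nn, A1 s) * (∑ t : Fin Nn, B2 t)
        + (∑ s : Fin Nn, A2 s) * (∑ t : Fin Nn, B1 t)
      ≤ ((∑ s : Fin Nn, A1 s) + (∑ s : Fin Nn, A2 s)) * ((r'':ℝ) * pnorm b) := by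
        rw [add_mul]; exact add_le_add e1 e2
    _ ≤ ((r':ℝ) * pnorm a) * ((r'':ℝ) * pnorm b) := e3
    _ = (r' : ℝ) * r'' * (pnorm a * pnorm b) := by ring




lemma geom_sum_le' {x : ℝ} (h0 : 0 ≤ x) (h1 : x < 1) (s : Finset ℕ) :
    ∑ i ∈ s, x^i ≤ 1/(1-x) := by
  have hsub : s ⊆ Finset.range (s.sup id + 1) := fun i hi =>
    Finset.mem_range.mpr (Nat.lt_succ_of_le (Finset.le_sup (f := id) hi))
  refine le_trans (Finset.sum_le_sum_of_subset_of_nonneg hsub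
    fun i _ _ => pow_nonneg h0 i) ?_
  rw [le_div_iff₀ (by linarith)]
  have := geom_sum_mul (x := x) (n := s.sup id + 1)
  have hrw : (∑ i ∈ Finset.range (s.sup id + 1), x ^ i) * (1 - x)
      = 1 - x ^ (s.sup id + 1) := by
    have : (∑ i ∈ Finset.range (s.sup id + 1), x ^ i) * (x - 1)
        = x ^ (s.sup id + 1) - 1 := geom_sum_mul x (s.sup id + 1)
    nlinarith [this]
  rw [hrw]
  nlinarith [pow_nonneg h0 (s.sup id + 1)]

lemma pairs_sum_le (s : Finset (ℕ×ℕ)) {a b : ℝ} (ha0 : 0 ≤ a) (ha1 : a < 1)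
    (hb0 : 0 ≤ b) (hb1 : b < 1) :
    ∑ q ∈ s, a^q.1 * b^q.2 ≤ (1/(1-a)) * (1/(1-b)) := by
  classical
  refine le_trans (Finset.sum_le_sum_of_subset_of_nonneg Finset.subset_product
    fun q _ _ => mul_nonneg (pow_nonneg ha0 _) (pow_nonneg hb0 _)) ?_
  rw [Finset.sum_product]
  have : ∀ x ∈ s.image Prod.fst, ∑ y ∈ s.image Prod.snd, a^x * b^y
      = a^x * ∑ y ∈ s.image Prod.snd, b^y := fun x _ => by rw [Finset.mul_sum]
  rw [Finset.sum_congr rfl this, ← Finset.sum_mul]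
  have g1 := geom_sum_le' ha0 ha1 (s.image Prod.fst)
  have g2 := geom_sum_le' hb0 hb1 (s.image Prod.snd)
  have n1 : 0 ≤ ∑ x ∈ s.image Prod.fst, a^x := Finset.sum_nonneg fun _ _ => pow_nonneg ha0 _
  have n2 : 0 ≤ ∑ y ∈ s.image Prod.snd, b^y := Finset.sum_nonneg fun _ _ => pow_nonneg hb0 _
  exact mul_le_mul g1 g2 n2 (le_trans n1 g1)

lemma arith_core (N m : ℕ) (σ σ' σ'' : ℝ) (hσ : 0 < σ)
    (h1 : σ < σ') (h2 : σ' ≤ σ'') :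
    ∑ m1 ∈ Finset.range (N+1), ∑ m2 ∈ Finset.range (N+1),
        (if min (m1+m2) N = m then Real.exp (-σ'*m1) * Real.exp (-σ''*m2) else 0)
      ≤ Real.exp (-σ*m) * ((1/(1-Real.exp (-σ''))) * (1/(1-Real.exp (-(σ''-σ))))) := by
  classical
  set a := Real.exp (-σ'') with ha
  set b := Real.exp (-(σ''-σ)) with hb
  have ha0 : 0 ≤ a := (Real.exp_pos _).le
  have ha1 : a < 1 := Real.exp_lt_one_iff.mpr (by linarith)
  have hb0 : 0 ≤ b := (Real.exp_pos _).le
  have hb1 : b < 1 := Real.exp_lt_one_iff.mpr (by linarith)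
  rw [← Finset.sum_product']
  have hsf : ∑ q ∈ Finset.range (N+1) ×ˢ Finset.range (N+1),
      (if min (q.1+q.2) N = m then Real.exp (-σ'*q.1) * Real.exp (-σ''*q.2) else 0)
      = ∑ q ∈ (Finset.range (N+1) ×ˢ Finset.range (N+1)).filter
          (fun q : ℕ×ℕ => min (q.1+q.2) N = m),
          Real.exp (-σ'*q.1) * Real.exp (-σ''*q.2) := (Finset.sum_filter _ _).symm
  rw [hsf]
  set F := (Finset.range (N+1) ×ˢ Finset.range (N+1)).filter
    (fun q : ℕ×ℕ => min (q.1+q.2) N = m) with hF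
  have hmem : ∀ q ∈ F, q.1 ≤ m ∧ m ≤ q.1 + q.2 := by
    rintro ⟨m1, m2⟩ hq
    simp only [hF, Finset.mem_filter, Finset.mem_product, Finset.mem_range] at hq
    omega
  have hpt : ∀ q ∈ F, Real.exp (-σ'*q.1) * Real.exp (-σ''*q.2)
      ≤ Real.exp (-σ*m) * (a^(q.1+q.2-m) * b^(m-q.1)) := by
    rintro ⟨m1, m2⟩ hq
    obtain ⟨hle1, hle2⟩ := hmem _ hq
    simp only at hle1 hle2 ⊢
    have hT : ((m1+m2-m : ℕ) : ℝ) = (m1:ℝ)+(m2:ℝ)-(m:ℝ) := by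
      rw [Nat.cast_sub hle2]; push_cast; ring
    have hK : ((m-m1 : ℕ) : ℝ) = (m:ℝ)-(m1:ℝ) := by
      rw [Nat.cast_sub hle1]
    have hm1c : (0:ℝ) ≤ (m1:ℝ) := Nat.cast_nonneg _
    calc Real.exp (-σ'*m1) * Real.exp (-σ''*m2)
        = Real.exp (-σ'*m1 + -σ''*m2) := (Real.exp_add _ _).symm
      _ ≤ Real.exp (-σ*m + (((m1+m2-m : ℕ):ℝ)*(-σ'') + ((m-m1 : ℕ):ℝ)*(-(σ''-σ)))) := by
          apply Real.exp_le_exp.mpr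
          rw [hT, hK]
          nlinarith [mul_le_mul_of_nonneg_right (le_of_lt h1) hm1c]
      _ = Real.exp (-σ*m) * (a^(m1+m2-m) * b^(m-m1)) := by
          rw [Real.exp_add, Real.exp_add, ha, hb,
            ← Real.exp_nat_mul, ← Real.exp_nat_mul]
  refine le_trans (Finset.sum_le_sum hpt) ?_
  rw [← Finset.mul_sum]
  refine mul_le_mul_of_nonneg_left ?_ (Real.exp_pos _).le
  have hinj : ∀ q ∈ F, ∀ q' ∈ F,
      (q.1+q.2-m, m-q.1) = (q'.1+q'.2-m, m-q'.1) → q = q' := by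
    rintro ⟨m1, m2⟩ hq ⟨m1', m2'⟩ hq' heq
    obtain ⟨a1, a2⟩ := hmem _ hq
    obtain ⟨b1, b2⟩ := hmem _ hq'
    simp only [Prod.mk.injEq] at heq ⊢
    omega
  have himg : ∑ p ∈ F.image (fun q : ℕ×ℕ => (q.1+q.2-m, m-q.1)), a^p.1*b^p.2
      = ∑ q ∈ F, a^(q.1+q.2-m)*b^(m-q.1) := Finset.sum_image hinj
  rw [← himg]
  exact pairs_sum_le _ ha0 ha1 hb0 hb1


lemma arith_full (N m : ℕ) (σ σ' σ'' : ℝ) (hσ : 0 < σ) (h1 : σ < min σ' σ'') :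
    ∑ m1 ∈ Finset.range (N+1), ∑ m2 ∈ Finset.range (N+1),
        (if min (m1+m2) N = m then Real.exp (-σ'*m1) * Real.exp (-σ''*m2) else 0)
      ≤ Real.exp (-σ*m) *
        ((1/(1-Real.exp (-(max σ' σ'')))) * (1/(1-Real.exp (-(max σ' σ'' - σ))))) := by
  rcases le_total σ' σ'' with hc | hc
  · rw [max_eq_right hc]
    exact arith_core N m σ σ' σ'' hσ (lt_of_lt_of_le h1 (min_le_left _ _)) hc
  · rw [max_eq_left hc]
    have key := arith_core N m σ σ'' σ' hσ (lt_of_lt_of_le h1 (min_le_right _ _)) hc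
    refine le_trans (le_of_eq ?_) key
    rw [Finset.sum_comm]
    refine Finset.sum_congr rfl fun m1 _ => Finset.sum_congr rfl fun m2 _ => ?_
    rw [add_comm m2 m1, mul_comm]





lemma rangeLE_iff_sitesIn (m : ℕ) (p : Pol N) :
    RangeLE m p ↔ sitesIn (Finset.univ.filter fun t : Fin N => (t:ℕ) ≤ m) p := by
  unfold RangeLE sitesIn
  constructor
  · intro h d hd l hl; exact Finset.mem_filter.mpr ⟨Finset.mem_univ _, h d hd l hl⟩
  · intro h d hd l hl; exact (Finset.mem_filter.mp (h d hd l hl)).2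

lemma rangeLE_top (p : Pol N) : RangeLE N p := fun d _ l _ => le_of_lt l.isLt

lemma rangeLE_zero (m : ℕ) : RangeLE m (0 : Pol N) := by
  intro d hd; simp at hd

lemma rangeLE_sum {α : Type*} {m : ℕ} {s : Finset α} {f : α → Pol N}
    (h : ∀ i ∈ s, RangeLE m (f i)) : RangeLE m (∑ i ∈ s, f i) := by
  classical
  rw [rangeLE_iff_sitesIn]
  intro d hd l hl
  obtain ⟨i, hi, hdi⟩ := Finset.mem_biUnion.mp (MvPolynomial.support_sum hd)
  exact Finset.mem_filter.mpr ⟨Finset.mem_univ _, h i hi d hdi l hl⟩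

lemma pbracket_sum_left {α : Type*} (s : Finset α) (f : α → Pol N) (b : Pol N) :
    pbracket (∑ i ∈ s, f i) b = ∑ i ∈ s, pbracket (f i) b := by
  unfold pbracket
  rw [Finset.sum_comm]
  refine Finset.sum_congr rfl fun l _ => ?_
  rw [map_sum, Finset.sum_mul, map_sum, Finset.sum_mul, ← Finset.sum_sub_distrib]

lemma pbracket_sum_right {α : Type*} (a : Pol N) (s : Finset α) (f : α → Pol N) :
    pbracket a (∑ i ∈ s, f i) = ∑ i ∈ s, pbracket a (f i) := by
  unfold pbracket
  rw [Finset.sum_comm]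
  refine Finset.sum_congr rfl fun l _ => ?_
  rw [map_sum, Finset.mul_sum, map_sum, Finset.mul_sum, ← Finset.sum_sub_distrib]

lemma val_finRotate_pow {n : ℕ} (k : ℕ) (t : Fin (n+1)) (hk : k ≤ n) (hsum : t.val + k ≤ n) :
    ((((finRotate (n+1))^k : Equiv.Perm (Fin (n+1)))) t : ℕ) = t.val + k := by
  rw [finRotate_pow_apply, Fin.val_add, Fin.val_natCast]
  have h1 : k % (n+1) = k := Nat.mod_eq_of_lt (by omega)
  rw [h1, Nat.mod_eq_of_lt (by omega)]

/-- range analysis for one (shifted) piece, in the non-capped case `m1+m2 < N` -/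
lemma piece_rangeLE {m1 m2 l : ℕ} {a b : Pol N}
    (ha : sitesIn (Finset.univ.filter fun t : Fin N => (t:ℕ) ≤ m1) a)
    (hb : sitesIn (Finset.univ.filter fun t : Fin N => (t:ℕ) ≤ m2) b)
    (hl1 : 1 ≤ l) (hl2 : l ≤ N) (hs : m1 + m2 < N) :
    RangeLE (m1+m2) (cshiftP^[if l ≤ m1 ∨ l = N then 0 else N - l]
      (pbracket a (cshiftP^[l] b))) := by
  classical
  obtain ⟨n, rfl⟩ : ∃ n, N = n + 1 := ⟨N - 1, by omega⟩
  rw [rangeLE_iff_sitesIn]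
  have haM : sitesIn (Finset.univ.filter fun t : Fin (n+1) => (t:ℕ) ≤ m1+m2) a :=
    sitesIn_mono (fun t ht => by
      simp only [Finset.mem_filter] at *; exact ⟨ht.1, le_trans ht.2 (by omega)⟩) ha
  have hbM : sitesIn (Finset.univ.filter fun t : Fin (n+1) => (t:ℕ) ≤ m1+m2) b :=
    sitesIn_mono (fun t ht => by
      simp only [Finset.mem_filter] at *; exact ⟨ht.1, le_trans ht.2 (by omega)⟩) hb
  by_cases hc : l ≤ m1 ∨ l = n + 1
  · rw [if_pos hc, Function.iterate_zero, id_eq]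
    rcases hc with hc | rfl
    · -- l ≤ m1 : no wrap, shift of b stays within [l, l+m2]
      have hbl : sitesIn (Finset.univ.filter fun t : Fin (n+1) => (t:ℕ) ≤ m1+m2)
          (cshiftP^[l] b) := by
        refine sitesIn_mono ?_ (sitesIn_cshiftP_iterate hb l)
        intro t ht
        obtain ⟨u, hu, rfl⟩ := Finset.mem_image.mp ht
        simp only [Finset.mem_filter, Finset.mem_univ, true_and] at hu ⊢
        rw [val_finRotate_pow l u (by omega) (by omega)]
        omega
      have := sitesIn_pbracket haM hbl
      rwa [Finset.union_self] at this
    · rw [cshiftP_iterate_N]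
      have := sitesIn_pbracket haM hbM
      rwa [Finset.union_self] at this
  · rw [if_neg hc]
    push_neg at hc
    obtain ⟨hm1l, hlN⟩ := hc
    have hlN' : l ≤ n := by omega
    by_cases hw : l + m2 ≤ n
    · -- disjoint supports: bracket is zero
      have hbl : sitesIn (Finset.univ.filter fun t : Fin (n+1) => m1 < (t:ℕ))
          (cshiftP^[l] b) := by
        refine sitesIn_mono ?_ (sitesIn_cshiftP_iterate hb l)
        intro t ht
        obtain ⟨u, hu, rfl⟩ := Finset.mem_image.mp ht
        simp only [Finset.mem_filter, Finset.mem_univ, true_and] at hu ⊢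
        rw [val_finRotate_pow l u (by omega) (by omega)]
        omega
      have hz : pbracket a (cshiftP^[l] b) = 0 := by
        refine pbracket_eq_zero_of_disjoint ?_ ha hbl
        rw [Finset.disjoint_left]
        intro t ht ht'
        simp only [Finset.mem_filter, Finset.mem_univ, true_and] at ht ht'
        omega
      rw [hz, cshiftP_iterate_zero]
      exact (rangeLE_iff_sitesIn _ _).mp (rangeLE_zero _)
    · -- wrap case: shift back by N - l
      rw [pbracket_cshiftP_iterate]
      have hback : cshiftP^[n+1-l] (cshiftP^[l] b) = b := by
        rw [← Function.iterate_add_apply, show n+1-l+l = n+1 by omega, cshiftP_iterate_N]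
      rw [hback]
      have hal : sitesIn (Finset.univ.filter fun t : Fin (n+1) => (t:ℕ) ≤ m1+m2)
          (cshiftP^[n+1-l] a) := by
        refine sitesIn_mono ?_ (sitesIn_cshiftP_iterate ha (n+1-l))
        intro t ht
        obtain ⟨u, hu, rfl⟩ := Finset.mem_image.mp ht
        simp only [Finset.mem_filter, Finset.mem_univ, true_and] at hu ⊢
        rw [val_finRotate_pow (n+1-l) u (by omega) (by omega)]
        omega
      have := sitesIn_pbracket hal hbM
      rwa [Finset.union_self] at this

lemma homogeneousComponent_support_subset (r : ℕ) (p : Pol N) :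
    (homogeneousComponent r p).support ⊆ p.support := by
  intro d hd
  rw [MvPolynomial.mem_support_iff] at hd ⊢
  rw [coeff_homogeneousComponent] at hd
  by_cases h : d.degree = r
  · rwa [if_pos h] at hd
  · rw [if_neg h] at hd; exact absurd rfl hd

lemma pnorm_homogeneousComponent_le (r : ℕ) (p : Pol N) :
    pnorm (homogeneousComponent r p) ≤ pnorm p := by
  classical
  unfold pnorm
  refine le_trans (Finset.sum_le_sum (f := fun d => |coeff d (homogeneousComponent r p)|)
    (g := fun d => |coeff d p|) fun d _ => ?_) ?_
  · rw [coeff_homogeneousComponent]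
    by_cases h : d.degree = r
    · rw [if_pos h]
    · rw [if_neg h, abs_zero]; exact abs_nonneg _
  · exact Finset.sum_le_sum_of_subset_of_nonneg (homogeneousComponent_support_subset r p)
      fun d _ _ => abs_nonneg _

lemma rangeLE_homogeneousComponent {m r : ℕ} {p : Pol N} (hp : RangeLE m p) :
    RangeLE m (homogeneousComponent r p) := fun d hd l hl =>
  hp d (homogeneousComponent_support_subset r p hd) l hl


lemma cshiftP_oplus (q : Pol N) : cshiftP (oplus q) = oplus q := by
  have h1 : cshiftP (oplus q) = ∑ l ∈ Finset.Icc 1 N, cshiftP (cshiftP^[l] q) := by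
    have := cshiftP_iterate_sum (N := N) 1 (Finset.Icc 1 N) (fun l => cshiftP^[l] q)
    simpa [Function.iterate_one, oplus] using this
  rw [h1]
  have h2 : ∀ l, cshiftP (cshiftP^[l] q) = cshiftP^[l] (cshiftP q) := fun l => by
    rw [← Function.iterate_succ_apply' cshiftP l q, Function.iterate_succ_apply]
  simp only [h2]
  rw [show (∑ l ∈ Finset.Icc 1 N, cshiftP^[l] (cshiftP q)) = oplus (cshiftP q) from rfl]
  exact oplus_cshiftP q

lemma cshiftP_iterate_oplus (k : ℕ) (q : Pol N) : cshiftP^[k] (oplus q) = oplus q := by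
  induction k with
  | zero => rfl
  | succ k ih => rw [Function.iterate_succ_apply', ih, cshiftP_oplus]

end St4


open St4 in
theorem stmt4 (N : ℕ) (r' r'' : ℕ) (f g : Pol N) (Cf Cg σ' σ'' σ : ℝ)
    (hf : f.IsHomogeneous r') (hg : g.IsHomogeneous r'')
    (hCf : 0 < Cf) (hCg : 0 < Cg) (hσ' : 0 < σ') (hσ'' : 0 < σ'')
    (hfD : SeedClassD Cf σ' f) (hgD : SeedClassD Cg σ'' g)
    (hσpos : 0 < σ) (hσ : σ < min σ' σ'') :
    ∃ h : Pol N, oplus h = pbracket (oplus f) (oplus g) ∧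
      SeedClassD ((r' : ℝ) * r'' * Cf * Cg /
          ((1 - Real.exp (-(max σ' σ''))) * (1 - Real.exp (-(max σ' σ'') + σ)))) σ h := by
  classical
  obtain ⟨F0, ⟨hF0sum, hF0range⟩, hF0dec⟩ := hfD
  obtain ⟨G0, ⟨hG0sum, hG0range⟩, hG0dec⟩ := hgD
  set Ff : ℕ → Pol N := fun m => homogeneousComponent r' (F0 m) with hFf
  set Fg : ℕ → Pol N := fun m => homogeneousComponent r'' (G0 m) with hFg
  have hFfsum : ∑ m ∈ Finset.range (N+1), Ff m = f := by
    simp only [hFf]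
    rw [← map_sum, ← hF0sum]
    have hmem : f ∈ homogeneousSubmodule (Fin N ⊕ Fin N) ℝ r' :=
      (mem_homogeneousSubmodule _ _).mpr hf
    rw [homogeneousComponent_of_mem hmem, if_pos rfl]
  have hFgsum : ∑ m ∈ Finset.range (N+1), Fg m = g := by
    simp only [hFg]
    rw [← map_sum, ← hG0sum]
    have hmem : g ∈ homogeneousSubmodule (Fin N ⊕ Fin N) ℝ r'' :=
      (mem_homogeneousSubmodule _ _).mpr hg
    rw [homogeneousComponent_of_mem hmem, if_pos rfl]
  have hFfhom : ∀ m, (Ff m).IsHomogeneous r' := fun m =>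
    homogeneousComponent_isHomogeneous r' (F0 m)
  have hFghom : ∀ m, (Fg m).IsHomogeneous r'' := fun m =>
    homogeneousComponent_isHomogeneous r'' (G0 m)
  have hFfdec : ∀ m : ℕ, pnorm (Ff m) ≤ Cf * Real.exp (-σ' * m) := fun m =>
    le_trans (pnorm_homogeneousComponent_le _ _) (hF0dec m)
  have hFgdec : ∀ m : ℕ, pnorm (Fg m) ≤ Cg * Real.exp (-σ'' * m) := fun m =>
    le_trans (pnorm_homogeneousComponent_le _ _) (hG0dec m)
  have hFfrange : ∀ m, RangeLE m (Ff m) := fun m =>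
    rangeLE_homogeneousComponent (hF0range m)
  have hFgrange : ∀ m, RangeLE m (Fg m) := fun m =>
    rangeLE_homogeneousComponent (hG0range m)
  set piece : ℕ → ℕ → ℕ → Pol N := fun m1 m2 l =>
    cshiftP^[if l ≤ m1 ∨ l = N then 0 else N - l]
      (pbracket (Ff m1) (cshiftP^[l] (Fg m2))) with hpiece
  set PS : ℕ → ℕ → Pol N := fun m1 m2 => ∑ l ∈ Finset.Icc 1 N, piece m1 m2 l with hPS
  set H : ℕ → Pol N := fun m => ∑ m1 ∈ Finset.range (N+1), ∑ m2 ∈ Finset.range (N+1),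
    (if min (m1+m2) N = m then PS m1 m2 else 0) with hH
  refine ⟨∑ m ∈ Finset.range (N+1), H m, ?_, H, ⟨rfl, ?_⟩, ?_⟩
  · -- oplus identity
    have hcollapse : ∑ m ∈ Finset.range (N+1), H m
        = ∑ m1 ∈ Finset.range (N+1), ∑ m2 ∈ Finset.range (N+1), PS m1 m2 := by
      simp only [hH]
      rw [Finset.sum_comm]
      refine Finset.sum_congr rfl fun m1 _ => ?_
      rw [Finset.sum_comm]
      refine Finset.sum_congr rfl fun m2 _ => ?_
      rw [Finset.sum_ite_eq (Finset.range (N+1)) (min (m1+m2) N) (fun _ => PS m1 m2),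
        if_pos (Finset.mem_range.mpr (by omega))]
    rw [hcollapse]
    have hstep1 : ∀ m1 m2 : ℕ, oplus (PS m1 m2)
        = oplus (pbracket (Ff m1) (oplus (Fg m2))) := by
      intro m1 m2
      simp only [hPS, hpiece]
      rw [oplus_sum]
      rw [Finset.sum_congr rfl fun l (_ : l ∈ Finset.Icc 1 N) =>
        oplus_cshiftP_iterate _ (pbracket (Ff m1) (cshiftP^[l] (Fg m2)))]
      rw [← oplus_sum, ← pbracket_sum_right]
      rfl
    calc oplus (∑ m1 ∈ Finset.range (N+1), ∑ m2 ∈ Finset.range (N+1), PS m1 m2)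
        = ∑ m1 ∈ Finset.range (N+1), ∑ m2 ∈ Finset.range (N+1), oplus (PS m1 m2) := by
          rw [oplus_sum]
          exact Finset.sum_congr rfl fun m1 _ => oplus_sum _ _
      _ = ∑ m1 ∈ Finset.range (N+1), ∑ m2 ∈ Finset.range (N+1),
            oplus (pbracket (Ff m1) (oplus (Fg m2))) := by
          exact Finset.sum_congr rfl fun m1 _ => Finset.sum_congr rfl fun m2 _ =>
            hstep1 m1 m2
      _ = oplus (∑ m1 ∈ Finset.range (N+1), ∑ m2 ∈ Finset.range (N+1),
            pbracket (Ff m1) (oplus (Fg m2))) := by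
          rw [oplus_sum]
          exact Finset.sum_congr rfl fun m1 _ => (oplus_sum _ _).symm
      _ = oplus (pbracket f (oplus g)) := by
          congr 1
          have hin : ∀ m1 : ℕ, ∑ m2 ∈ Finset.range (N+1), pbracket (Ff m1) (oplus (Fg m2))
              = pbracket (Ff m1) (oplus g) := by
            intro m1
            rw [← pbracket_sum_right, ← oplus_sum, hFgsum]
          rw [Finset.sum_congr rfl fun m1 _ => hin m1, ← pbracket_sum_left, hFfsum]
      _ = pbracket (oplus f) (oplus g) := by
          rw [show oplus (pbracket f (oplus g))
              = ∑ l ∈ Finset.Icc 1 N, cshiftP^[l] (pbracket f (oplus g)) from rfl]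
          rw [Finset.sum_congr rfl fun l (_ : l ∈ Finset.Icc 1 N) =>
            pbracket_cshiftP_iterate l f (oplus g)]
          rw [Finset.sum_congr rfl fun l (_ : l ∈ Finset.Icc 1 N) => by
            rw [cshiftP_iterate_oplus l g]]
          rw [← pbracket_sum_left]
          rfl

  · -- RangeLE
    intro m
    simp only [hH]
    refine rangeLE_sum fun m1 _ => rangeLE_sum fun m2 _ => ?_
    by_cases hcond : min (m1+m2) N = m
    · rw [if_pos hcond]
      by_cases hcap : m1 + m2 < N
      · have hmm : m = m1 + m2 := by omega
        subst hmm
        simp only [hPS, hpiece]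
        refine rangeLE_sum fun l hl => ?_
        rw [Finset.mem_Icc] at hl
        exact piece_rangeLE ((rangeLE_iff_sitesIn _ _).mp (hFfrange m1))
          ((rangeLE_iff_sitesIn _ _).mp (hFgrange m2)) hl.1 hl.2 hcap
      · have hmm : m = N := by omega
        subst hmm
        exact rangeLE_top _
    · rw [if_neg hcond]
      exact rangeLE_zero m
  · -- Decay
    intro m
    have hKnn : (0:ℝ) ≤ (r':ℝ) * r'' * Cf * Cg := by positivity
    have hbound1 : pnorm (H m) ≤ ∑ m1 ∈ Finset.range (N+1), ∑ m2 ∈ Finset.range (N+1),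
        (if min (m1+m2) N = m
          then ((r':ℝ) * r'' * Cf * Cg) * (Real.exp (-σ'*m1) * Real.exp (-σ''*m2)) else 0) := by
      simp only [hH]
      refine (pnorm_sum_le _ _).trans (Finset.sum_le_sum fun m1 _ => ?_)
      refine (pnorm_sum_le _ _).trans (Finset.sum_le_sum fun m2 _ => ?_)
      by_cases hcond : min (m1+m2) N = m
      · rw [if_pos hcond, if_pos hcond]
        simp only [hPS, hpiece]
        refine (pnorm_sum_le _ _).trans ?_
        rw [Finset.sum_congr rfl fun l (_ : l ∈ Finset.Icc 1 N) =>
          pnorm_cshiftP_iterate _ (pbracket (Ff m1) (cshiftP^[l] (Fg m2)))]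
        refine (sum_pnorm_pbracket_shifts _ _ (hFfhom m1) (hFghom m2)).trans ?_
        have h1 := hFfdec m1
        have h2 := hFgdec m2
        have e1 : 0 ≤ pnorm (Fg m2) := pnorm_nonneg _
        have hmul : pnorm (Ff m1) * pnorm (Fg m2)
            ≤ (Cf * Real.exp (-σ'*m1)) * (Cg * Real.exp (-σ''*m2)) :=
          mul_le_mul h1 h2 e1 (by positivity)
        calc (r':ℝ) * r'' * (pnorm (Ff m1) * pnorm (Fg m2))
            ≤ (r':ℝ) * r'' * ((Cf * Real.exp (-σ'*m1)) * (Cg * Real.exp (-σ''*m2))) :=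
              mul_le_mul_of_nonneg_left hmul (by positivity)
          _ = ((r':ℝ) * r'' * Cf * Cg) * (Real.exp (-σ'*m1) * Real.exp (-σ''*m2)) := by ring
      · rw [if_neg hcond, if_neg hcond, pnorm_zero]
    have hfac : ∑ m1 ∈ Finset.range (N+1), ∑ m2 ∈ Finset.range (N+1),
        (if min (m1+m2) N = m
          then ((r':ℝ) * r'' * Cf * Cg) * (Real.exp (-σ'*m1) * Real.exp (-σ''*m2)) else 0)
        = ((r':ℝ) * r'' * Cf * Cg) * ∑ m1 ∈ Finset.range (N+1), ∑ m2 ∈ Finset.range (N+1),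
          (if min (m1+m2) N = m then Real.exp (-σ'*m1) * Real.exp (-σ''*m2) else 0) := by
      rw [Finset.mul_sum]
      refine Finset.sum_congr rfl fun m1 _ => ?_
      rw [Finset.mul_sum]
      refine Finset.sum_congr rfl fun m2 _ => ?_
      split
      · rfl
      · rw [mul_zero]
    have harith := arith_full N m σ σ' σ'' hσpos hσ
    have hstep : pnorm (H m) ≤ ((r':ℝ) * r'' * Cf * Cg) *
        (Real.exp (-σ*m) * ((1/(1-Real.exp (-(max σ' σ''))))
          * (1/(1-Real.exp (-(max σ' σ'' - σ)))))) := by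
      refine hbound1.trans ?_
      rw [hfac]
      exact mul_le_mul_of_nonneg_left harith hKnn
    refine hstep.trans (le_of_eq ?_)
    have hMpos : 0 < max σ' σ'' := lt_of_lt_of_le hσ' (le_max_left _ _)
    have hσM : σ < max σ' σ'' := lt_of_lt_of_le hσ (le_trans (min_le_left _ _) (le_max_left _ _))
    have hA : (1:ℝ) - Real.exp (-(max σ' σ'')) ≠ 0 := by
      have : Real.exp (-(max σ' σ'')) < 1 := Real.exp_lt_one_iff.mpr (by linarith)
      linarith
    have hB : (1:ℝ) - Real.exp (-(max σ' σ'' - σ)) ≠ 0 := by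
      have : Real.exp (-(max σ' σ'' - σ)) < 1 := Real.exp_lt_one_iff.mpr (by linarith)
      linarith
    have hrw : -(max σ' σ'') + σ = -(max σ' σ'' - σ) := by ring
    rw [hrw]
    field_simp
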